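/- Let h₀ be the discrete Dirichlet Laplacian with hopping constant c > 0 on ℓ²(ℕ). For every E ∈ ℝ the limit g(E) = −lim_{ε↓0} ⟨δ₀, (h₀ − E − iε)^{−1} δ₀⟩ exists; moreover g(E) = (1/c)·e^{−iθ} whenever E = 2c·cos θ with θ ∈ [0,π], and g(E) = ±(1/c)·e^{−χ} whenever E = ±2c·cosh χ with χ ≥ 0. -/

import Mathlib

noncomputable section
open Complex Filter

/-- `ℓ²(ℕ)` with complex coefficients. -/
abbrev H1 : Type := lp (fun _ : ℕ => ℂ) 2

/-- The standard basis vector (Kronecker delta) at site `x`. -/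
def delta (x : ℕ) : H1 := lp.single 2 x (1 : ℂ)

/-- identity for the imaginary part: if w≠0 is a root of c w² + z w + c, then
Im z = c * Im w * (1 - |w|²)/|w|². -/
lemma im_identity (c : ℝ) (z w : ℂ) (hw : (c:ℂ)*w^2 + z*w + (c:ℂ) = 0) (hw0 : w ≠ 0) :
    z.im = c * w.im * (1 - Complex.normSq w) / Complex.normSq w := by
  have hz : z = -((c:ℂ)*w + (c:ℂ)*w⁻¹) := by
    field_simp
    linear_combination hw
  have hm : Complex.normSq w ≠ 0 := by simpa [Complex.normSq_eq_zero] using hw0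
  rw [hz]
  simp [Complex.neg_im, Complex.add_im, Complex.mul_im, Complex.inv_im, Complex.inv_re,
    Complex.ofReal_re, Complex.ofReal_im]
  field_simp
  ring

lemma root_ne_zero (c : ℝ) (hc : 0 < c) (z w : ℂ) (hw : (c:ℂ)*w^2 + z*w + (c:ℂ) = 0) :
    w ≠ 0 := by
  intro h
  rw [h] at hw
  simp at hw
  exact absurd hw (by exact_mod_cast hc.ne')

/-- uniqueness of the root in the closed upper unit half-disc (real E). -/
lemma quad_unique (c : ℝ) (hc : 0 < c) (E : ℝ) (w w' : ℂ)
    (hw : (c:ℂ)*w^2 + (E:ℂ)*w + (c:ℂ) = 0) (h1 : ‖w‖ ≤ 1) (h2 : 0 ≤ w.im)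
    (hw' : (c:ℂ)*w'^2 + (E:ℂ)*w' + (c:ℂ) = 0) (h1' : ‖w'‖ ≤ 1) (h2' : 0 ≤ w'.im) :
    w = w' := by
  by_contra hne
  have hsub : (w - w') * ((c:ℂ)*(w + w') + E) = 0 := by linear_combination hw - hw'
  have hsum : (c:ℂ)*(w + w') + E = 0 := by
    rcases mul_eq_zero.1 hsub with h | h
    · exact absurd (sub_eq_zero.1 h) hne
    · exact h
  have hprod : w * w' = 1 := by
    have hcne : (c:ℂ) ≠ 0 := by exact_mod_cast hc.ne'
    have hEeq : (E:ℂ) = -(c*(w+w')) := by linear_combination hsum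
    rw [hEeq] at hw
    have : (c:ℂ) * (1 - w*w') = 0 := by linear_combination hw
    rcases mul_eq_zero.1 this with h | h
    · exact absurd h hcne
    · linear_combination -h
  have habs : ‖w‖ = 1 ∧ ‖w'‖ = 1 := by
    have := congrArg norm hprod
    rw [norm_mul, norm_one] at this
    constructor <;> nlinarith [norm_nonneg w, norm_nonneg w']
  -- imaginary parts: w + w' = -E/c real ⇒ im w' = -im w ⇒ both zero
  have hsumim : w.im + w'.im = 0 := by
    have := congrArg Complex.im hsum
    simp [Complex.add_im, Complex.mul_im, Complex.ofReal_im, Complex.ofReal_re] at this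
    rcases this with h | h
    · exact absurd h hc.ne'
    · exact h
  have hwim : w.im = 0 := by linarith
  have hw'im : w'.im = 0 := by linarith
  -- w, w' real of modulus one
  have hwre : w = (w.re : ℂ) := by
    apply Complex.ext <;> simp [hwim]
  have hw're : w' = (w'.re : ℂ) := by
    apply Complex.ext <;> simp [hw'im]
  have h1v : |w.re| = 1 := by
    have := habs.1
    rw [hwre] at this
    simpa using this
  have h2v : |w'.re| = 1 := by
    have := habs.2
    rw [hw're] at this
    simpa using this
  have hprodre : w.re * w'.re = 1 := by
    have := congrArg Complex.re hprod
    simpa [Complex.mul_re, hwim, hw'im] using this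
  apply hne
  rw [hwre, hw're]
  norm_cast
  rcases abs_eq (by norm_num : (0:ℝ) ≤ 1) |>.1 h1v with h | h <;>
    rcases abs_eq (by norm_num : (0:ℝ) ≤ 1) |>.1 h2v with h' | h' <;>
      rw [h, h'] at hprodre ⊢ <;> norm_num at hprodre

/-- existence of a root in the closed upper half-disc for every real E -/
lemma quad_exists (c : ℝ) (hc : 0 < c) (E : ℝ) :
    ∃ w : ℂ, (c:ℂ)*w^2 + (E:ℂ)*w + (c:ℂ) = 0 ∧ ‖w‖ ≤ 1 ∧ 0 ≤ w.im := by
  rcases le_or_gt (E^2) (4*c^2) with h | h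
  · -- |E| ≤ 2c : w = (-E + i√(4c²-E²))/(2c)
    set b : ℝ := Real.sqrt (4*c^2 - E^2) / (2*c) with hb
    set a : ℝ := -E / (2*c) with ha
    refine ⟨⟨a, b⟩, ?_, ?_, ?_⟩
    · have hb2 : b^2 = (4*c^2 - E^2)/(4*c^2) := by
        rw [hb, div_pow, Real.sq_sqrt (by linarith)]
        ring
      apply Complex.ext <;>
        simp [Complex.mul_re, Complex.mul_im, Complex.ofReal_re, Complex.ofReal_im, pow_two,
          Complex.add_re, Complex.add_im] <;>
        rw [ha] <;> field_simp at hb2 ⊢ <;> nlinarith [hb2]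
    · have hb2 : b^2 = (4*c^2 - E^2)/(4*c^2) := by
        rw [hb, div_pow, Real.sq_sqrt (by linarith)]
        ring
      have : ‖(⟨a, b⟩ : ℂ)‖ = 1 := by
        rw [Complex.norm_def, Complex.normSq_mk]
        rw [show a*a + b*b = 1 by rw [ha]; field_simp at hb2 ⊢; nlinarith [hb2]]
        exact Real.sqrt_one
      exact this.le
    · simp only [hb]
      positivity
  · -- |E| > 2c
    set t : ℝ := Real.sqrt (E^2 - 4*c^2) with ht
    have ht2 : t^2 = E^2 - 4*c^2 := Real.sq_sqrt (by linarith)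
    have htnn : 0 ≤ t := Real.sqrt_nonneg _
    rcases le_or_gt 0 E with hE | hE
    · have hE2 : 2*c ≤ E := by nlinarith
      refine ⟨(((t - E)/(2*c) : ℝ) : ℂ), ?_, ?_, le_of_eq (Complex.ofReal_im _).symm⟩
      · have : c * ((t-E)/(2*c))^2 + E * ((t-E)/(2*c)) + c = 0 := by
          field_simp
          nlinarith [ht2]
        exact_mod_cast this
      · rw [Complex.norm_real, Real.norm_eq_abs, abs_div, abs_of_pos (by linarith : (0:ℝ) < 2*c)]
        rw [div_le_one (by linarith)]
        have h1 : t - E ≤ 0 := by nlinarith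
        rw [_root_.abs_of_nonpos h1]
        have : E - 2*c ≤ t := by
          have h2 : 0 ≤ E - 2*c := by linarith
          nlinarith
        linarith
    · have hE2 : E ≤ -(2*c) := by nlinarith
      refine ⟨(((-E - t)/(2*c) : ℝ) : ℂ), ?_, ?_, le_of_eq (Complex.ofReal_im _).symm⟩
      · have : c * ((-E-t)/(2*c))^2 + E * ((-E-t)/(2*c)) + c = 0 := by
          field_simp
          nlinarith [ht2]
        exact_mod_cast this
      · rw [Complex.norm_real, Real.norm_eq_abs, abs_div, abs_of_pos (by linarith : (0:ℝ) < 2*c)]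
        rw [div_le_one (by linarith)]
        have h1 : 0 ≤ -E - t := by nlinarith
        rw [_root_.abs_of_nonneg h1]
        have : -E - 2*c ≤ t := by nlinarith
        linarith

lemma cpow_half_sq (x : ℂ) : (x ^ (1/2 : ℂ))^2 = x := by
  by_cases hx : x = 0
  · rw [hx, Complex.zero_cpow (by norm_num)]
    norm_num
  · rw [sq, ← Complex.cpow_add _ _ hx]
    norm_num

lemma root_im_pos (c : ℝ) (hc : 0 < c) (z w : ℂ) (hz : 0 < z.im)
    (hw : (c:ℂ)*w^2 + z*w + (c:ℂ) = 0) (habs : ‖w‖ < 1) : 0 < w.im := by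
  have hw0 := root_ne_zero c hc z w hw
  have hid := im_identity c z w hw hw0
  have hm0 : 0 < Complex.normSq w := Complex.normSq_pos.2 hw0
  have hm1 : Complex.normSq w < 1 := by
    rw [← Complex.sq_norm]
    nlinarith [norm_nonneg w]
  have h2 : z.im * Complex.normSq w = c * w.im * (1 - Complex.normSq w) := by
    field_simp at hid
    linarith
  by_contra hb
  push_neg at hb
  have hneg : c * w.im * (1 - Complex.normSq w) ≤ 0 :=
    mul_nonpos_iff.2 (Or.inr ⟨mul_nonpos_iff.2 (Or.inl ⟨hc.le, hb⟩), by linarith⟩)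
  nlinarith [mul_pos hz hm0]

lemma root_abs_ne_one (c : ℝ) (hc : 0 < c) (z w : ℂ) (hz : z.im ≠ 0)
    (hw : (c:ℂ)*w^2 + z*w + (c:ℂ) = 0) : ‖w‖ ≠ 1 := by
  intro h1
  have hw0 := root_ne_zero c hc z w hw
  have hid := im_identity c z w hw hw0
  rw [← Complex.sq_norm, h1] at hid
  norm_num at hid
  exact hz hid

/-- for Im z ≠ 0 there is a root with |w| < 1 -/
lemma exists_small_root (c : ℝ) (hc : 0 < c) (z : ℂ) (hz : z.im ≠ 0) :
    ∃ w : ℂ, (c:ℂ)*w^2 + z*w + (c:ℂ) = 0 ∧ ‖w‖ < 1 := by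
  have hcne : (c:ℂ) ≠ 0 := by exact_mod_cast hc.ne'
  set s : ℂ := (z^2 - 4*(c:ℂ)^2) ^ (1/2 : ℂ) with hs
  have hs2 : s^2 = z^2 - 4*(c:ℂ)^2 := cpow_half_sq _
  set w1 : ℂ := (-z + s)/(2*c) with hw1
  set w2 : ℂ := (-z - s)/(2*c) with hw2
  have hr1 : (c:ℂ)*w1^2 + z*w1 + (c:ℂ) = 0 := by
    rw [hw1]
    field_simp
    linear_combination hs2
  have hr2 : (c:ℂ)*w2^2 + z*w2 + (c:ℂ) = 0 := by
    rw [hw2]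
    field_simp
    linear_combination hs2
  have hprod : w1 * w2 = 1 := by
    rw [hw1, hw2]
    field_simp
    linear_combination -hs2
  have habs : ‖w1‖ * ‖w2‖ = 1 := by
    rw [← norm_mul, hprod, norm_one]
  have hne1 := root_abs_ne_one c hc z w1 hz hr1
  have hne2 := root_abs_ne_one c hc z w2 hz hr2
  rcases lt_or_gt_of_ne hne1 with h | h
  · exact ⟨w1, hr1, h⟩
  · refine ⟨w2, hr2, ?_⟩
    nlinarith [norm_nonneg w2]

lemma resolvent_eq (c : ℝ) (hc : 0 < c)
    (h0 : H1 →L[ℂ] H1)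
    (hDir0 : ∀ ψ : H1, (h0 ψ) 0 = -(c : ℂ) * ψ 1)
    (hDir1 : ∀ (ψ : H1) (x : ℕ), (h0 ψ) (x + 1) = -(c : ℂ) * (ψ x + ψ (x + 2)))
    (R : ℂ → (H1 →L[ℂ] H1))
    (hR : ∀ z : ℂ, z.im ≠ 0 → (h0 - z • 1) * R z = 1 ∧ R z * (h0 - z • 1) = 1)
    (z w : ℂ) (hz : z.im ≠ 0)
    (hw : (c:ℂ)*w^2 + z*w + (c:ℂ) = 0) (habs : ‖w‖ < 1) :
    (inner ℂ (delta 0) (R z (delta 0)) : ℂ) = w / c := by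
  have hcne : (c:ℂ) ≠ 0 := by exact_mod_cast hc.ne'
  set r : ℝ := ‖w‖ with hr
  set f : ℕ → ℂ := fun x => w^(x+1)/c with hf
  have hmem : Memℓp f 2 := by
    apply memℓp_gen
    have hr0 : (0:ℝ) ≤ r^2 := by positivity
    have hr2 : r^2 < 1 := by nlinarith [norm_nonneg w]
    have hsum : Summable (fun x : ℕ => (r^2)^x * (r^2/c^2)) :=
      (summable_geometric_of_lt_one hr0 hr2).mul_right _
    refine hsum.congr fun x => ?_
    have hnorm : ‖f x‖ = r^(x+1)/c := by
      rw [hf]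
      simp only [norm_div, norm_pow, Complex.norm_real, Real.norm_eq_abs,
        abs_of_pos hc, hr]
    rw [hnorm, (by norm_num : (ENNReal.toReal 2) = ((2:ℕ):ℝ)), Real.rpow_natCast]
    rw [div_pow]
    ring
  obtain ⟨φ, hφap⟩ : ∃ φ : H1, ∀ n, φ n = w^(n+1)/c := ⟨⟨f, hmem⟩, fun n => rfl⟩
  have happly : ∀ x, ((h0 - z • (1 : H1 →L[ℂ] H1)) φ) x = (h0 φ) x - z * φ x := by
    intro x
    rw [ContinuousLinearMap.sub_apply, ContinuousLinearMap.smul_apply,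
      ContinuousLinearMap.one_apply, lp.coeFn_sub, Pi.sub_apply, lp.coeFn_smul, Pi.smul_apply,
      smul_eq_mul]
  have hφeq : (h0 - z • (1 : H1 →L[ℂ] H1)) φ = delta 0 := by
    apply lp.ext
    funext x
    cases x with
    | zero =>
      rw [happly 0, hDir0 φ, hφap 0, hφap 1]
      show -(c:ℂ) * (w ^ 2 / c) - z * (w ^ 1 / c) = delta 0 0
      rw [show delta 0 0 = 1 from lp.single_apply_self 2 0 1]
      field_simp
      linear_combination -hw
    | succ x =>
      rw [happly (x+1), hDir1 φ x, hφap x, hφap (x+1), hφap (x+2)]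
      show -(c:ℂ) * (w ^ (x+1) / c + w ^ (x+3) / c) - z * (w ^ (x+2) / c) = delta 0 (x+1)
      rw [show delta 0 (x+1) = 0 from lp.single_apply_ne 2 0 1 (Nat.succ_ne_zero x)]
      field_simp
      linear_combination (-w^(x+1)) * hw
  have hRδ : R z (delta 0) = φ := by
    calc R z (delta 0) = R z ((h0 - z • (1 : H1 →L[ℂ] H1)) φ) := by rw [hφeq]
      _ = (R z * (h0 - z • (1 : H1 →L[ℂ] H1))) φ := rfl
      _ = (1 : H1 →L[ℂ] H1) φ := by rw [(hR z hz).2]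
      _ = φ := rfl
  rw [hRδ]
  rw [show delta 0 = lp.single 2 0 (1:ℂ) from rfl, lp.inner_single_left]
  simp only [RCLike.inner_apply, map_one, one_mul]
  rw [hφap 0]
  norm_num


/-- existence and explicit values of the boundary value
`g(E) = -lim_{ε↓0} ⟨δ₀, (h₀ - E - iε)⁻¹ δ₀⟩` of the diagonal resolvent matrix element
of the discrete Dirichlet Laplacian at site `0`. -/
theorem dirichlet_laplacian_diagonal_boundary_value
    (c : ℝ) (hc : 0 < c)
    (h0 : H1 →L[ℂ] H1) (h0sa : IsSelfAdjoint h0)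
    (hDir0 : ∀ ψ : H1, (h0 ψ) 0 = -(c : ℂ) * ψ 1)
    (hDir1 : ∀ (ψ : H1) (x : ℕ), (h0 ψ) (x + 1) = -(c : ℂ) * (ψ x + ψ (x + 2)))
    (R : ℂ → (H1 →L[ℂ] H1))
    (hR : ∀ z : ℂ, z.im ≠ 0 → (h0 - z • 1) * R z = 1 ∧ R z * (h0 - z • 1) = 1) :
    ∃ g : ℝ → ℂ,
      (∀ E : ℝ,
        Tendsto (fun ε : ℝ => -(inner ℂ (delta 0) (R ((E : ℂ) + (ε : ℂ) * I) (delta 0)) : ℂ))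
          (nhdsWithin 0 (Set.Ioi 0)) (nhds (g E))) ∧
      (∀ θ : ℝ, θ ∈ Set.Icc 0 Real.pi →
        g (2 * c * Real.cos θ) = (1 / (c : ℂ)) * Complex.exp (-I * (θ : ℂ))) ∧
      (∀ χ : ℝ, 0 ≤ χ →
        g (2 * c * Real.cosh χ) = (1 / (c : ℂ)) * Complex.exp (-(χ : ℂ)) ∧
        g (-(2 * c * Real.cosh χ)) = -((1 / (c : ℂ)) * Complex.exp (-(χ : ℂ)))) := by
  have hcne : (c:ℂ) ≠ 0 := by exact_mod_cast hc.ne'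
  choose W hW using quad_exists c hc
  refine ⟨fun E => -(W E)/c, ?_, ?_, ?_⟩
  · -- the limit statement
    intro E
    -- total small-root function along the vertical line above E
    have hex : ∀ ε : ℝ, ∃ w : ℂ, ‖w‖ ≤ 1 ∧ (0 < ε →
        ((c:ℂ)*w^2 + ((E:ℂ)+(ε:ℂ)*I)*w + (c:ℂ) = 0 ∧ 0 < w.im ∧
          (inner ℂ (delta 0) (R ((E:ℂ)+(ε:ℂ)*I) (delta 0)) : ℂ) = w / c)) := by
      intro ε
      by_cases hε : 0 < ε
      · have him : ((E:ℂ)+(ε:ℂ)*I).im = ε := by simp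
        have hzne : ((E:ℂ)+(ε:ℂ)*I).im ≠ 0 := by rw [him]; exact hε.ne'
        obtain ⟨w, hroot, habs⟩ := exists_small_root c hc _ hzne
        refine ⟨w, habs.le, fun _ => ⟨hroot, ?_, ?_⟩⟩
        · exact root_im_pos c hc _ w (by rw [him]; exact hε) hroot habs
        · exact resolvent_eq c hc h0 hDir0 hDir1 R hR _ w hzne hroot habs
      · exact ⟨0, by simp, fun h => absurd h hε⟩
    choose u hu1 hu2 using hex
    apply tendsto_of_subseq_tendsto
    intro ns hns
    obtain ⟨L, hLmem, φ, hφmono, hφlim⟩ :=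
      (isCompact_closedBall (0:ℂ) 1).tendsto_subseq
        (x := fun n => u (ns n)) (fun n => by
          simpa [Metric.mem_closedBall, dist_zero_right] using hu1 (ns n))
    have hns' : Tendsto (fun n => ns (φ n)) atTop (nhdsWithin 0 (Set.Ioi 0)) :=
      hns.comp hφmono.tendsto_atTop
    have hpos : ∀ᶠ n in atTop, 0 < ns (φ n) :=
      hns'.eventually (eventually_mem_nhdsWithin)
    have hns0 : Tendsto (fun n => ns (φ n)) atTop (nhds 0) :=
      hns'.mono_right nhdsWithin_le_nhds
    -- limit of the quadratic identity
    have hq : (c:ℂ)*L^2 + (E:ℂ)*L + (c:ℂ) = 0 := by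
      have h1 : Tendsto (fun n => (c:ℂ)*(u (ns (φ n)))^2 +
          ((E:ℂ)+((ns (φ n):ℝ):ℂ)*I)*(u (ns (φ n))) + (c:ℂ)) atTop
          (nhds ((c:ℂ)*L^2 + (E:ℂ)*L + (c:ℂ))) := by
        have hulim : Tendsto (fun n => u (ns (φ n))) atTop (nhds L) := hφlim
        have hzl : Tendsto (fun n => (E:ℂ)+((ns (φ n):ℝ):ℂ)*I) atTop (nhds (E:ℂ)) := by
          have : Tendsto (fun n => ((ns (φ n):ℝ):ℂ)) atTop (nhds 0) := by
            have := (Complex.continuous_ofReal.tendsto 0).comp hns0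
            simpa [Function.comp_def] using this
          have := tendsto_const_nhds (x := (E:ℂ)) (f := atTop).add (this.mul_const I)
          simpa using this
        have := ((tendsto_const_nhds (x := (c:ℂ)) (f := atTop)).mul
            (hulim.pow 2)).add (hzl.mul hulim) |>.add
            (tendsto_const_nhds (x := (c:ℂ)) (f := atTop))
        simpa using this
      have h2 : Tendsto (fun n => (c:ℂ)*(u (ns (φ n)))^2 +
          ((E:ℂ)+((ns (φ n):ℝ):ℂ)*I)*(u (ns (φ n))) + (c:ℂ)) atTop (nhds 0) := by
        apply Tendsto.congr' _ (tendsto_const_nhds (x := (0:ℂ)))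
        filter_upwards [hpos] with n hn
        exact ((hu2 (ns (φ n)) hn).1).symm
      exact tendsto_nhds_unique h1 h2
    have hLim : 0 ≤ L.im := by
      have h1 : Tendsto (fun n => (u (ns (φ n))).im) atTop (nhds L.im) :=
        (Complex.continuous_im.tendsto L).comp hφlim
      apply ge_of_tendsto h1
      filter_upwards [hpos] with n hn
      exact ((hu2 (ns (φ n)) hn).2.1).le
    have hLabs : ‖L‖ ≤ 1 := by
      simpa [Metric.mem_closedBall, dist_zero_right] using hLmem
    have hLW : L = W E := quad_unique c hc E L (W E) hq hLabs hLim
      (hW E).1 (hW E).2.1 (hW E).2.2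
    refine ⟨φ, ?_⟩
    have hfin : Tendsto (fun n => -(u (ns (φ n)))/(c:ℂ)) atTop (nhds (-(W E)/c)) := by
      rw [← hLW]
      exact (hφlim.neg).div_const _
    apply Tendsto.congr' _ hfin
    filter_upwards [hpos] with n hn
    rw [(hu2 (ns (φ n)) hn).2.2]
    ring
  · -- cosine values
    intro θ hθ
    set w₀ : ℂ := -(Real.cos θ : ℂ) + (Real.sin θ:ℂ)*I with hw₀
    have h1 : ((Real.sin θ:ℂ))^2 + ((Real.cos θ:ℂ))^2 = 1 := by
      exact_mod_cast congrArg (fun x : ℝ => (x : ℂ)) (Real.sin_sq_add_cos_sq θ)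
    have hq : (c:ℂ)*w₀^2 + ((2*c*Real.cos θ : ℝ):ℂ)*w₀ + (c:ℂ) = 0 := by
      rw [hw₀, Complex.ofReal_mul, Complex.ofReal_mul, Complex.ofReal_ofNat]
      linear_combination (c:ℂ)*((Real.sin θ:ℂ))^2 * Complex.I_sq - (c:ℂ)*h1
    have habs : ‖w₀‖ ≤ 1 := by
      have hsq : Complex.normSq w₀ = 1 := by
        rw [hw₀]
        simp only [Complex.normSq_apply, Complex.add_re, Complex.add_im, Complex.neg_re,
          Complex.neg_im, Complex.ofReal_re, Complex.ofReal_im, Complex.mul_re, Complex.mul_im,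
          Complex.I_re, Complex.I_im]
        nlinarith [Real.sin_sq_add_cos_sq θ]
      rw [Complex.norm_def, hsq, Real.sqrt_one]
    have him : 0 ≤ w₀.im := by
      rw [hw₀]
      simp only [Complex.add_im, Complex.neg_im, Complex.ofReal_im, Complex.mul_im,
        Complex.ofReal_re, Complex.I_im, Complex.I_re]
      simpa using Real.sin_nonneg_of_nonneg_of_le_pi hθ.1 hθ.2
    have hWval : W (2*c*Real.cos θ) = w₀ :=
      quad_unique c hc _ _ _ (hW _).1 (hW _).2.1 (hW _).2.2 hq habs him
    have hexp : Complex.exp (-I*(θ:ℂ)) = (Real.cos θ : ℂ) - (Real.sin θ:ℂ)*I := by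
      rw [show -I*(θ:ℂ) = ((-θ : ℝ):ℂ)*I by push_cast; ring]
      rw [Complex.exp_mul_I, ← Complex.ofReal_cos, ← Complex.ofReal_sin,
        Real.cos_neg, Real.sin_neg]
      push_cast
      ring
    show -(W (2*c*Real.cos θ))/(c:ℂ) = 1/(c:ℂ) * Complex.exp (-I*(θ:ℂ))
    rw [hWval, hexp, hw₀]
    field_simp
    ring
  · -- hyperbolic cosine values
    intro χ hχ
    have hexpχ : Complex.exp (-(χ:ℂ)) = ((Real.exp (-χ) : ℝ):ℂ) := by
      rw [Complex.ofReal_exp, Complex.ofReal_neg]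
    have hee : Real.exp (-χ) * Real.exp χ = 1 := by
      rw [← Real.exp_add]; simp
    have hle : Real.exp (-χ) ≤ 1 := by
      rw [← Real.exp_zero]
      exact Real.exp_le_exp.2 (by linarith)
    constructor
    · set w₀ : ℂ := -((Real.exp (-χ) : ℝ):ℂ) with hw₀
      have hqr : c * (-(Real.exp (-χ)))^2 + (2*c*Real.cosh χ) * (-(Real.exp (-χ))) + c = 0 := by
        rw [Real.cosh_eq]
        nlinarith [hee]
      have hq : (c:ℂ)*w₀^2 + ((2*c*Real.cosh χ : ℝ):ℂ)*w₀ + (c:ℂ) = 0 := by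
        rw [hw₀]
        exact_mod_cast congrArg (fun x : ℝ => (x:ℂ)) hqr
      have habs : ‖w₀‖ ≤ 1 := by
        rw [hw₀, norm_neg, Complex.norm_real, Real.norm_eq_abs,
          _root_.abs_of_nonneg (Real.exp_nonneg _)]
        exact hle
      have him : 0 ≤ w₀.im := by
        rw [hw₀]
        simp only [Complex.neg_im, Complex.ofReal_im, neg_zero, le_refl]
      have hWval : W (2*c*Real.cosh χ) = w₀ :=
        quad_unique c hc _ _ _ (hW _).1 (hW _).2.1 (hW _).2.2 hq habs him
      show -(W (2*c*Real.cosh χ))/(c:ℂ) = 1/(c:ℂ) * Complex.exp (-(χ:ℂ))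
      rw [hWval, hexpχ, hw₀]
      field_simp
    · set w₀ : ℂ := ((Real.exp (-χ) : ℝ):ℂ) with hw₀
      have hqr : c * (Real.exp (-χ))^2 + (-(2*c*Real.cosh χ)) * (Real.exp (-χ)) + c = 0 := by
        rw [Real.cosh_eq]
        nlinarith [hee]
      have hq : (c:ℂ)*w₀^2 + ((-(2*c*Real.cosh χ) : ℝ):ℂ)*w₀ + (c:ℂ) = 0 := by
        rw [hw₀]
        exact_mod_cast congrArg (fun x : ℝ => (x:ℂ)) hqr
      have habs : ‖w₀‖ ≤ 1 := by
        rw [hw₀, Complex.norm_real, Real.norm_eq_abs, _root_.abs_of_nonneg (Real.exp_nonneg _)]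
        exact hle
      have him : 0 ≤ w₀.im := by
        rw [hw₀]
        simp only [Complex.ofReal_im, le_refl]
      have hWval : W (-(2*c*Real.cosh χ)) = w₀ :=
        quad_unique c hc _ _ _ (hW _).1 (hW _).2.1 (hW _).2.2 hq habs him
      show -(W (-(2*c*Real.cosh χ)))/(c:ℂ) = -(1/(c:ℂ) * Complex.exp (-(χ:ℂ)))
      rw [hWval, hexpχ, hw₀]
      field_simp
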